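/- Let μ and ν be probability measures on ℝ^d supported in a common set of K points {x₁,…,x_K} with respective weight vectors a, b ∈ Σ_K, and let (V₁,…,V_K) be a partition of ℝ^d with xₖ ∈ Vₖ and squared diameter of each Vₖ at most D. Suppose μ' and ν' are probability measures with μ'(Vₖ) = aₖ and ν'(Vₖ) = bₖ for all k. Then W₂²(μ, ν) ≤ 3 W₂²(μ', ν') + 6D. -/

import Mathlib

open MeasureTheory Set
open scoped ENNReal

noncomputable def W2sq {E : Type*} [MeasurableSpace E] [PseudoMetricSpace E]
    (μ ν : Measure E) : ℝ≥0∞ :=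
  ⨅ π : {π : Measure (E × E) // π.map Prod.fst = μ ∧ π.map Prod.snd = ν},
    ∫⁻ p, ENNReal.ofReal (dist p.1 p.2 ^ 2) ∂(π : Measure (E × E))

/-- if `μ, ν` are supported on `K` points `xₖ` with weights `a, b ∈ Σ_K`,
`(Vₖ)` is a partition with `xₖ ∈ Vₖ` and squared diameter at most `D`, and `μ', ν'` are
probability measures with `μ'(Vₖ) = aₖ`, `ν'(Vₖ) = bₖ`, then
`W₂²(μ, ν) ≤ 3 W₂²(μ', ν') + 6D`. -/
theorem stmt_18 {d : ℕ} (K : ℕ) (hK : 0 < K)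
    (x : Fin K → EuclideanSpace ℝ (Fin d)) (a b : Fin K → ℝ)
    (ha : ∀ k, 0 ≤ a k) (hb : ∀ k, 0 ≤ b k) (hsa : ∑ k, a k = 1) (hsb : ∑ k, b k = 1)
    (V : Fin K → Set (EuclideanSpace ℝ (Fin d)))
    (hVmeas : ∀ k, MeasurableSet (V k))
    (hVcover : (⋃ k, V k) = univ)
    (hVdisj : Pairwise (Function.onFun Disjoint V))
    (hxV : ∀ k, x k ∈ V k)
    (D : ℝ) (hD : ∀ k, ∀ p ∈ V k, ∀ q ∈ V k, dist p q ^ 2 ≤ D)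
    (μ ν : Measure (EuclideanSpace ℝ (Fin d)))
    (hμ : μ = ∑ k, ENNReal.ofReal (a k) • Measure.dirac (x k))
    (hν : ν = ∑ k, ENNReal.ofReal (b k) • Measure.dirac (x k))
    (μ' ν' : Measure (EuclideanSpace ℝ (Fin d)))
    (hμ'p : IsProbabilityMeasure μ') (hν'p : IsProbabilityMeasure ν')
    (hμ' : ∀ k, μ' (V k) = ENNReal.ofReal (a k))
    (hν' : ∀ k, ν' (V k) = ENNReal.ofReal (b k)) :
    W2sq μ ν ≤ 3 * W2sq μ' ν' + 6 * ENNReal.ofReal D := by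
  classical
  -- every point lies in some cell
  have hex : ∀ p : EuclideanSpace ℝ (Fin d), ∃ k, p ∈ V k := by
    intro p
    have hp : p ∈ ⋃ k, V k := by rw [hVcover]; exact mem_univ p
    simpa [mem_iUnion] using hp
  -- index of the cell containing p
  let idx : EuclideanSpace ℝ (Fin d) → Fin K := fun p => (hex p).choose
  have hmem : ∀ p, p ∈ V (idx p) := fun p => (hex p).choose_spec
  have huniq : ∀ p (k : Fin K), p ∈ V k → idx p = k := by
    intro p k hk
    by_contra hne
    exact (hVdisj hne).le_bot ⟨hmem p, hk⟩
  have hD0 : 0 ≤ D := by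
    have := hD ⟨0, hK⟩ _ (hxV ⟨0, hK⟩) _ (hxV ⟨0, hK⟩)
    simpa using this
  -- the map sending a point to its cell's center
  let f : EuclideanSpace ℝ (Fin d) → EuclideanSpace ℝ (Fin d) := fun p => x (idx p)
  have hpre : ∀ S : Set (EuclideanSpace ℝ (Fin d)),
      f ⁻¹' S = ⋃ k ∈ {k : Fin K | x k ∈ S}, V k := by
    intro S
    ext p
    simp only [mem_preimage, mem_iUnion, mem_setOf_eq, exists_prop]
    constructor
    · intro h; exact ⟨idx p, h, hmem p⟩
    · rintro ⟨k, hk, hpk⟩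
      show x (idx p) ∈ S
      rw [huniq p k hpk]; exact hk
  have hfmeas : Measurable f := by
    intro S hS
    rw [hpre S]
    exact MeasurableSet.biUnion (Set.to_countable _) fun k _ => hVmeas k
  -- pushforward of a measure with cell masses c is the discrete measure
  have hpush : ∀ (m : Measure (EuclideanSpace ℝ (Fin d))) (c : Fin K → ℝ),
      (∀ k, m (V k) = ENNReal.ofReal (c k)) →
      m.map f = ∑ k, ENNReal.ofReal (c k) • Measure.dirac (x k) := by
    intro m c hm
    ext S hS
    rw [Measure.map_apply hfmeas hS, hpre S]
    have he : (⋃ k ∈ {k : Fin K | x k ∈ S}, V k)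
        = ⋃ k ∈ Finset.filter (fun k => x k ∈ S) Finset.univ, V k := by
      ext p; simp
    rw [he, measure_biUnion_finset (fun i _ j _ hij => hVdisj hij) (fun k _ => hVmeas k)]
    simp only [Measure.coe_finset_sum, Finset.sum_apply, Measure.smul_apply,
      Measure.dirac_apply' _ hS, smul_eq_mul]
    rw [Finset.sum_filter]
    refine Finset.sum_congr rfl fun k _ => ?_
    rw [hm k]
    by_cases hk : x k ∈ S <;> simp [hk]
  have hmeasg : Measurable fun p : (EuclideanSpace ℝ (Fin d)) × (EuclideanSpace ℝ (Fin d)) =>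
      ENNReal.ofReal (dist p.1 p.2 ^ 2) :=
    ((measurable_dist.comp (measurable_fst.prodMk measurable_snd)).pow_const 2).ennreal_ofReal
  -- main estimate for each coupling of μ', ν'
  have main : ∀ π : {π : Measure ((EuclideanSpace ℝ (Fin d)) × (EuclideanSpace ℝ (Fin d))) //
        π.map Prod.fst = μ' ∧ π.map Prod.snd = ν'},
      W2sq μ ν ≤ 3 * (∫⁻ p, ENNReal.ofReal (dist p.1 p.2 ^ 2) ∂(π : Measure ((EuclideanSpace ℝ (Fin d)) × (EuclideanSpace ℝ (Fin d)))))
        + 6 * ENNReal.ofReal D := by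
    rintro ⟨π, hπ1, hπ2⟩
    have hπuniv : π univ = 1 := by
      have := congrArg (fun m : Measure (EuclideanSpace ℝ (Fin d)) => m univ) hπ1
      simp only [Measure.map_apply measurable_fst MeasurableSet.univ] at this
      simpa [measure_univ] using this
    have hTmeas : Measurable (Prod.map f f) := hfmeas.prodMap hfmeas
    have hfst : (π.map (Prod.map f f)).map Prod.fst = μ := by
      rw [Measure.map_map measurable_fst hTmeas]
      have h1 : Prod.fst ∘ (Prod.map f f) = f ∘ Prod.fst := rfl
      rw [h1, ← Measure.map_map hfmeas measurable_fst, hπ1, hμ]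
      exact hpush μ' a hμ'
    have hsnd : (π.map (Prod.map f f)).map Prod.snd = ν := by
      rw [Measure.map_map measurable_snd hTmeas]
      have h1 : Prod.snd ∘ (Prod.map f f) = f ∘ Prod.snd := rfl
      rw [h1, ← Measure.map_map hfmeas measurable_snd, hπ2, hν]
      exact hpush ν' b hν'
    have hW : W2sq μ ν ≤ ∫⁻ p, ENNReal.ofReal (dist p.1 p.2 ^ 2) ∂(π.map (Prod.map f f)) := by
      have := iInf_le (fun π : {π : Measure ((EuclideanSpace ℝ (Fin d)) ×
          (EuclideanSpace ℝ (Fin d))) // π.map Prod.fst = μ ∧ π.map Prod.snd = ν} =>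
          ∫⁻ p, ENNReal.ofReal (dist p.1 p.2 ^ 2) ∂(π : Measure ((EuclideanSpace ℝ (Fin d)) × (EuclideanSpace ℝ (Fin d)))))
          ⟨π.map (Prod.map f f), hfst, hsnd⟩
      exact this
    refine hW.trans ?_
    rw [lintegral_map hmeasg hTmeas]
    have hb2 : ∫⁻ p, ENNReal.ofReal (dist ((Prod.map f f) p).1 ((Prod.map f f) p).2 ^ 2) ∂π
        ≤ ∫⁻ p, (3 * ENNReal.ofReal (dist p.1 p.2 ^ 2) + ENNReal.ofReal (6 * D)) ∂π := by
      refine lintegral_mono fun p => ?_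
      simp only [Prod.map_fst, Prod.map_snd]
      have h1 : dist (f p.1) p.1 ^ 2 ≤ D := hD (idx p.1) _ (hxV _) _ (hmem p.1)
      have h2 : dist p.2 (f p.2) ^ 2 ≤ D := by
        rw [dist_comm]; exact hD (idx p.2) _ (hxV _) _ (hmem p.2)
      have htri : dist (f p.1) (f p.2) ≤
          dist (f p.1) p.1 + dist p.1 p.2 + dist p.2 (f p.2) := dist_triangle4 _ _ _ _
      have hreal : dist (f p.1) (f p.2) ^ 2 ≤ 3 * dist p.1 p.2 ^ 2 + 6 * D := by
        have hd0 : (0:ℝ) ≤ dist (f p.1) (f p.2) := dist_nonneg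
        nlinarith [sq_nonneg (dist (f p.1) p.1 - dist p.1 p.2),
          sq_nonneg (dist (f p.1) p.1 - dist p.2 (f p.2)),
          sq_nonneg (dist p.1 p.2 - dist p.2 (f p.2)),
          dist_nonneg (x := f p.1) (y := p.1), dist_nonneg (x := p.1) (y := p.2),
          dist_nonneg (x := p.2) (y := f p.2)]
      calc ENNReal.ofReal (dist (f p.1) (f p.2) ^ 2)
          ≤ ENNReal.ofReal (3 * dist p.1 p.2 ^ 2 + 6 * D) := ENNReal.ofReal_le_ofReal hreal
        _ ≤ ENNReal.ofReal (3 * dist p.1 p.2 ^ 2) + ENNReal.ofReal (6 * D) :=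
            ENNReal.ofReal_add_le
        _ = 3 * ENNReal.ofReal (dist p.1 p.2 ^ 2) + ENNReal.ofReal (6 * D) := by
            rw [ENNReal.ofReal_mul (by norm_num)]
            norm_num
    refine hb2.trans ?_
    rw [lintegral_add_right _ measurable_const, lintegral_const_mul _ hmeasg,
      lintegral_const, hπuniv, mul_one, ENNReal.ofReal_mul (by norm_num : (0:ℝ) ≤ 6)]
    norm_num
  -- conclude
  rcases isEmpty_or_nonempty
      {π : Measure ((EuclideanSpace ℝ (Fin d)) × (EuclideanSpace ℝ (Fin d))) //
        π.map Prod.fst = μ' ∧ π.map Prod.snd = ν'} with h | h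
  · have htop : W2sq μ' ν' = ⊤ := iInf_of_empty _
    rw [htop]
    simp
  · have heq : (3 : ℝ≥0∞) * W2sq μ' ν' + 6 * ENNReal.ofReal D
        = ⨅ π : {π : Measure ((EuclideanSpace ℝ (Fin d)) × (EuclideanSpace ℝ (Fin d))) //
            π.map Prod.fst = μ' ∧ π.map Prod.snd = ν'},
          (3 * (∫⁻ p, ENNReal.ofReal (dist p.1 p.2 ^ 2) ∂(π : Measure ((EuclideanSpace ℝ (Fin d)) × (EuclideanSpace ℝ (Fin d)))))
            + 6 * ENNReal.ofReal D) := by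
      rw [W2sq, ENNReal.mul_iInf_of_ne (by norm_num) (by norm_num), ENNReal.iInf_add]
    rw [heq]
    exact le_iInf main
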